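/- Soft Bellman contraction: in a finite discounted MDP, for β > 0 define the soft Bellman operator (T_soft V)(s) = β·log Σ_{a∈A} exp( ( r(s,a) + γ Σ_{s'∈S} P(s'|s,a) V(s') ) / β ). Then T_soft is a Lipschitz map with constant γ on functions V : S → ℝ with the supremum norm, and since 0 ≤ γ < 1 it has a unique fixed point V_soft : S → ℝ satisfying the soft Bellman optimality equation Q(s,a) = r(s,a) + γ Σ_{s'} P(s'|s,a) V_soft(s') with V_soft(s) = β·log Σ_a exp(Q(s,a)/β). -/

import Mathlib

/-- The soft Bellman operator
`(T_soft V)(s) = β·log Σ_a exp((r(s,a) + γ Σ_{s'} P(s'|s,a) V(s'))/β)`. -/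
noncomputable def Tsoft {S A : Type*} [Fintype S] [Fintype A]
    (P : S → A → S → ℝ) (r : S → A → ℝ) (γ β : ℝ) (V : S → ℝ) : S → ℝ :=
  fun s => β * Real.log (∑ a, Real.exp ((r s a + γ * ∑ s', P s a s' * V s') / β))

lemma tsoft_sub_le {S A : Type*} [Fintype S] [Fintype A] [Nonempty A]
    (P : S → A → S → ℝ) (hP0 : ∀ s a s', 0 ≤ P s a s')
    (hP1 : ∀ s a, ∑ s', P s a s' = 1)
    (r : S → A → ℝ) (γ : ℝ) (hγ0 : 0 ≤ γ)
    (β : ℝ) (hβ : 0 < β) (V W : S → ℝ) (M : ℝ)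
    (hM : ∀ s', V s' - W s' ≤ M) (s : S) :
    Tsoft P r γ β V s - Tsoft P r γ β W s ≤ γ * M := by
  set B := ∑ a, Real.exp ((r s a + γ * ∑ s', P s a s' * W s') / β) with hB
  have hBpos : 0 < B :=
    Finset.sum_pos (fun a _ => Real.exp_pos _) Finset.univ_nonempty
  have hAB : ∑ a, Real.exp ((r s a + γ * ∑ s', P s a s' * V s') / β)
      ≤ Real.exp (γ * M / β) * B := by
    rw [hB, Finset.mul_sum]
    apply Finset.sum_le_sum
    intro a _
    rw [← Real.exp_add]
    apply Real.exp_le_exp.mpr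
    rw [← add_div, div_le_div_iff₀ hβ hβ]
    have hsum : (∑ s', P s a s' * V s') - ∑ s', P s a s' * W s' ≤ M := by
      rw [← Finset.sum_sub_distrib]
      calc (∑ s', (P s a s' * V s' - P s a s' * W s'))
          ≤ ∑ s', P s a s' * M := by
            apply Finset.sum_le_sum
            intro s' _
            have := hM s'
            have := hP0 s a s'
            nlinarith
        _ = M := by rw [← Finset.sum_mul, hP1, one_mul]
    have h2 := mul_le_mul_of_nonneg_right (mul_le_mul_of_nonneg_left hsum hγ0) hβ.le
    nlinarith [h2]
  have hlog : Real.log (∑ a, Real.exp ((r s a + γ * ∑ s', P s a s' * V s') / β))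
      ≤ γ * M / β + Real.log B := by
    calc Real.log (∑ a, Real.exp ((r s a + γ * ∑ s', P s a s' * V s') / β))
        ≤ Real.log (Real.exp (γ * M / β) * B) :=
          Real.log_le_log (by positivity) hAB
      _ = γ * M / β + Real.log B := by
          rw [Real.log_mul (Real.exp_ne_zero _) hBpos.ne', Real.log_exp]
  simp only [Tsoft, ← hB]
  have := mul_le_mul_of_nonneg_left hlog hβ.le
  calc β * Real.log (∑ a, Real.exp ((r s a + γ * ∑ s', P s a s' * V s') / β))
        - β * Real.log B
      ≤ β * (γ * M / β + Real.log B) - β * Real.log B := by linarith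
    _ = γ * M := by field_simp; ring

lemma tsoft_abs_le {S A : Type*} [Fintype S] [Fintype A] [Nonempty A]
    (P : S → A → S → ℝ) (hP0 : ∀ s a s', 0 ≤ P s a s')
    (hP1 : ∀ s a, ∑ s', P s a s' = 1)
    (r : S → A → ℝ) (γ : ℝ) (hγ0 : 0 ≤ γ)
    (β : ℝ) (hβ : 0 < β) (V W : S → ℝ) (M : ℝ)
    (hM : ∀ s', |V s' - W s'| ≤ M) (s : S) :
    |Tsoft P r γ β V s - Tsoft P r γ β W s| ≤ γ * M := by
  rw [abs_sub_le_iff]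
  constructor
  · exact tsoft_sub_le P hP0 hP1 r γ hγ0 β hβ V W M
      (fun s' => (abs_sub_le_iff.mp (hM s')).1) s
  · exact tsoft_sub_le P hP0 hP1 r γ hγ0 β hβ W V M
      (fun s' => (abs_sub_le_iff.mp (hM s')).2) s

/-- Soft Bellman contraction: `T_soft` is `γ`-Lipschitz in the
supremum norm, and since `0 ≤ γ < 1` it has a unique fixed point `V_soft`
satisfying the soft Bellman optimality equation
`V_soft(s) = β·log Σ_a exp(Q(s,a)/β)` with
`Q(s,a) = r(s,a) + γ Σ_{s'} P(s'|s,a) V_soft(s')`. -/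
theorem stmt17 {S A : Type*} [Fintype S] [Fintype A] [Nonempty S] [Nonempty A]
    (P : S → A → S → ℝ) (hP0 : ∀ s a s', 0 ≤ P s a s')
    (hP1 : ∀ s a, ∑ s', P s a s' = 1)
    (r : S → A → ℝ) (γ : ℝ) (hγ0 : 0 ≤ γ) (hγ1 : γ < 1)
    (β : ℝ) (hβ : 0 < β) :
    (∀ V W : S → ℝ,
        (Finset.univ.sup' Finset.univ_nonempty
          (fun s => |Tsoft P r γ β V s - Tsoft P r γ β W s|))
        ≤ γ * Finset.univ.sup' Finset.univ_nonempty (fun s => |V s - W s|))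
    ∧ (∃! V : S → ℝ, ∀ s,
        V s = β * Real.log
          (∑ a, Real.exp ((r s a + γ * ∑ s', P s a s' * V s') / β))) := by
  constructor
  · intro V W
    apply Finset.sup'_le
    intro s _
    exact tsoft_abs_le P hP0 hP1 r γ hγ0 β hβ V W _
      (fun s' => Finset.le_sup' (fun s => |V s - W s|) (Finset.mem_univ s')) s
  · have hlip : LipschitzWith ⟨γ, hγ0⟩ (Tsoft P r γ β) := by
      apply LipschitzWith.of_dist_le_mul
      intro V W
      rw [dist_pi_le_iff (by positivity)]
      intro s
      rw [Real.dist_eq]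
      exact tsoft_abs_le P hP0 hP1 r γ hγ0 β hβ V W (dist V W)
        (fun s' => by rw [← Real.dist_eq]; exact dist_le_pi_dist V W s') s
    have hc : ContractingWith ⟨γ, hγ0⟩ (Tsoft P r γ β) :=
      ⟨by exact_mod_cast hγ1, hlip⟩
    refine ⟨hc.fixedPoint (Tsoft P r γ β), ?_, ?_⟩
    · intro s
      have := hc.fixedPoint_isFixedPt (f := Tsoft P r γ β)
      exact (congrFun this s).symm
    · intro V hV
      apply hc.fixedPoint_unique
      exact funext fun s => (hV s).symm
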